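/- (Weak regularity lemma for tuples of bigraphons) For all r, m ∈ ℕ, every m-tuple (W₁,…,W_m) of bigraphons on Ω², and every partition 𝓟* of Ω, there exists a partition 𝓟 of Ω into at most r·|𝓟*| classes refining 𝓟* such that for each i ∈ [m], the cut norm ‖W_i − (W_i)^{⋈𝓟}‖_□ < √(2m/log r), where (W_i)^{⋈𝓟} is the stepping of W_i according to 𝓟. -/

import Mathlib

open MeasureTheory

/-- The cut norm: `sup_{S,T ⊆ Ω measurable} |∫_{S×T} X|`. -/
noncomputable def cutNorm {Ω : Type*} [MeasurableSpace Ω] (μ : Measure Ω)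
    (X : Ω → Ω → ℝ) : ℝ :=
  ⨆ S : {s : Set Ω // MeasurableSet s}, ⨆ T : {t : Set Ω // MeasurableSet t},
    |∫ x in S.1, ∫ y in T.1, X x y ∂μ ∂μ|

/-- The stepping `W^{⋈𝓟}` of a bigraphon `W` with respect to the partition of `Ω` given
by the fibres of `P : Ω → Fin N`: on the cell `A × B` it is the average of `W` over
`A × B`. -/
noncomputable def stepping {Ω : Type*} [MeasurableSpace Ω] (μ : Measure Ω) {N : ℕ}
    (P : Ω → Fin N) (W : Ω → Ω → ℝ) : Ω → Ω → ℝ :=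
  fun x y =>
    (∫ u in P ⁻¹' {P x}, ∫ v in P ⁻¹' {P y}, W u v ∂μ ∂μ) /
      ((μ (P ⁻¹' {P x})).toReal * (μ (P ⁻¹' {P y})).toReal)


open Set Function

section API
set_option linter.unusedSectionVars false
variable {Ω : Type*} [MeasurableSpace Ω] {μ : Measure Ω} [IsProbabilityMeasure μ]
  {N : ℕ} {P : Ω → Fin N} {f : Ω → Ω → ℝ} {C : ℝ}

/-- bounded (by `C`) measurable function of two variables -/
def BM (f : Ω → Ω → ℝ) (C : ℝ) : Prop :=
  Measurable (uncurry f) ∧ ∀ x y, |f x y| ≤ C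

lemma BM.intSec (hf : BM f C) (x : Ω) (T : Set Ω) :
    Integrable (f x) (μ.restrict T) := by
  have : Measurable (f x) := hf.1.comp measurable_prodMk_left
  exact Integrable.mono' (integrable_const C)
    this.aestronglyMeasurable (Filter.Eventually.of_forall fun y => hf.2 x y)

lemma BM.innerMeas (hf : BM f C) (T : Set Ω) :
    Measurable (fun x => ∫ y in T, f x y ∂μ) :=
  (hf.1.stronglyMeasurable.integral_prod_right' (ν := μ.restrict T)).measurable

lemma abs_setIntegral_le {T : Set Ω} {g : Ω → ℝ} (hC : 0 ≤ C) (hg : ∀ y, |g y| ≤ C)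
    (hgi : Integrable g (μ.restrict T)) :
    |∫ y in T, g y ∂μ| ≤ C := by
  have h1 : |∫ y in T, g y ∂μ| ≤ ∫ y in T, |g y| ∂μ := by
    simpa [Real.norm_eq_abs] using norm_integral_le_integral_norm (μ := μ.restrict T) g
  have h2 : ∫ y in T, |g y| ∂μ ≤ ∫ _y in T, C ∂μ :=
    integral_mono hgi.abs (integrable_const C) (fun y => hg y)
  have h3 : (∫ _y in T, C ∂μ) = (μ T).toReal * C := by simp [smul_eq_mul, measureReal_def]
  have h4 : (μ T).toReal ≤ 1 := by
    simpa using (ENNReal.toReal_mono (by simp) (prob_le_one (μ := μ) (s := T)))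
  nlinarith [h1, h2]

lemma BM.intInner (hC : 0 ≤ C) (hf : BM f C) (S T : Set Ω) :
    Integrable (fun x => ∫ y in T, f x y ∂μ) (μ.restrict S) := by
  refine Integrable.mono' (integrable_const C) (hf.innerMeas T).aestronglyMeasurable
    (Filter.Eventually.of_forall fun x => ?_)
  simpa using abs_setIntegral_le hC (hf.2 x) (hf.intSec x T)

lemma BM.intSecFull (hf : BM f C) (x : Ω) : Integrable (f x) μ := by
  simpa using hf.intSec (μ := μ) x univ

lemma BM.intInnerFull (hC : 0 ≤ C) (hf : BM f C) :
    Integrable (fun x => ∫ y, f x y ∂μ) μ := by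
  simpa using hf.intInner (μ := μ) hC univ univ

lemma abs_II_le {S T : Set Ω} (hC : 0 ≤ C) (hf : BM f C) :
    |∫ x in S, ∫ y in T, f x y ∂μ ∂μ| ≤ C := by
  refine abs_setIntegral_le hC (fun x => ?_) (hf.intInner hC S T)
  exact abs_setIntegral_le hC (hf.2 x) (hf.intSec x T)

lemma integral_partition (hP : Measurable P) {g : Ω → ℝ}
    (hg : Integrable g μ) :
    ∫ x, g x ∂μ = ∑ a : Fin N, ∫ x in P ⁻¹' {a}, g x ∂μ := by
  have hmeas : ∀ a : Fin N, MeasurableSet (P ⁻¹' {a}) := fun a => hP (measurableSet_singleton a)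
  have hdisj : Pairwise (Disjoint on fun a : Fin N => P ⁻¹' {a}) := by
    intro a b hab
    simp only [Function.onFun, Set.disjoint_left]
    intro x hxa hxb
    simp only [Set.mem_preimage, Set.mem_singleton_iff] at hxa hxb
    exact hab (hxa ▸ hxb ▸ rfl)
  have hcover : (⋃ a : Fin N, P ⁻¹' {a}) = Set.univ := by ext x; simp
  rw [← setIntegral_univ, ← hcover, integral_iUnion hmeas hdisj hg.integrableOn, tsum_fintype]

lemma BM.mulG (hC : 0 ≤ C) (hf : BM f C) (hP : Measurable P) {G : Fin N → Fin N → ℝ}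
    {D : ℝ} (hG : ∀ a b, |G a b| ≤ D) :
    BM (fun x y => f x y * G (P x) (P y)) (C * D) := by
  constructor
  · apply hf.1.mul
    exact (measurable_of_countable (uncurry G)).comp
      ((hP.comp measurable_fst).prodMk (hP.comp measurable_snd))
  · intro x y
    rw [abs_mul]
    exact mul_le_mul (hf.2 x y) (hG _ _) (abs_nonneg _) hC

lemma L0 (hC : 0 ≤ C) (hf : BM f C) (hP : Measurable P) (G : Fin N → Fin N → ℝ)
    {D : ℝ} (hG : ∀ a b, |G a b| ≤ D) :
    ∫ x, ∫ y, f x y * G (P x) (P y) ∂μ ∂μ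
      = ∑ a : Fin N, ∑ b : Fin N,
          G a b * ∫ x in P ⁻¹' {a}, ∫ y in P ⁻¹' {b}, f x y ∂μ ∂μ := by
  have : Nonempty Ω := Measure.nonempty_of_neZero μ
  obtain ⟨x0⟩ := this
  have hD : 0 ≤ D := le_trans (abs_nonneg _) (hG (P x0) (P x0))
  have hmeas : ∀ a : Fin N, MeasurableSet (P ⁻¹' {a}) := fun a => hP (measurableSet_singleton a)
  have hfG : BM (fun x y => f x y * G (P x) (P y)) (C * D) := hf.mulG hC hP hG
  rw [integral_partition hP (hfG.intInnerFull (mul_nonneg hC hD))]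
  refine Finset.sum_congr rfl fun a _ => ?_
  have hstep1 : EqOn (fun x => ∫ y, f x y * G (P x) (P y) ∂μ)
      (fun x => ∑ b : Fin N, G a b * ∫ y in P ⁻¹' {b}, f x y ∂μ) (P ⁻¹' {a}) := by
    intro x hx
    have hPx : P x = a := hx
    simp only [hPx]
    have hint : Integrable (fun y => f x y * G a (P y)) μ := by
      refine Integrable.mono' (integrable_const (C * D)) ?_
        (Filter.Eventually.of_forall fun y => ?_)
      · exact ((hf.1.comp measurable_prodMk_left).mul
          ((measurable_of_countable (G a)).comp hP)).aestronglyMeasurable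
      · rw [Real.norm_eq_abs, abs_mul]
        exact mul_le_mul (hf.2 x y) (hG a (P y)) (abs_nonneg _) hC
    rw [integral_partition hP hint]
    refine Finset.sum_congr rfl fun b _ => ?_
    rw [setIntegral_congr_fun (hmeas b) (fun y hy => by
      show f x y * G a (P y) = f x y * G a b
      rw [show P y = b from hy])]
    rw [integral_mul_const, mul_comm]
  rw [setIntegral_congr_fun (hmeas a) hstep1]
  rw [integral_finset_sum _ (fun b _ => ((hf.intInner hC _ _).const_mul _))]
  refine Finset.sum_congr rfl fun b _ => ?_
  rw [integral_const_mul]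
/-- average of `w` over the cell `a × b` -/
noncomputable def Fav (μ : Measure Ω) (P : Ω → Fin N) (w : Ω → Ω → ℝ) (a b : Fin N) : ℝ :=
  (∫ u in P ⁻¹' {a}, ∫ v in P ⁻¹' {b}, w u v ∂μ ∂μ) /
    ((μ (P ⁻¹' {a})).toReal * (μ (P ⁻¹' {b})).toReal)

lemma stepping_eq_F {w : Ω → Ω → ℝ} (x y : Ω) :
    stepping μ P w x y = Fav μ P w (P x) (P y) := rfl

lemma abs_setIntegral_le' {T : Set Ω} {g : Ω → ℝ} (hC : 0 ≤ C) (hg : ∀ y, |g y| ≤ C)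
    (hgi : Integrable g (μ.restrict T)) :
    |∫ y in T, g y ∂μ| ≤ (μ T).toReal * C := by
  have h1 : |∫ y in T, g y ∂μ| ≤ ∫ y in T, |g y| ∂μ := by
    simpa [Real.norm_eq_abs] using norm_integral_le_integral_norm (μ := μ.restrict T) g
  have h2 : ∫ y in T, |g y| ∂μ ≤ ∫ _y in T, C ∂μ :=
    integral_mono hgi.abs (integrable_const C) (fun y => hg y)
  have h3 : (∫ _y in T, C ∂μ) = (μ T).toReal * C := by simp [smul_eq_mul, measureReal_def]
  linarith

lemma Fav_abs_le (hC : 0 ≤ C) (hw : BM w C) (a b : Fin N) :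
    |Fav μ P w a b| ≤ C := by
  set A := P ⁻¹' {a}; set B := P ⁻¹' {b}
  have hnum : |∫ u in A, ∫ v in B, w u v ∂μ ∂μ| ≤ (μ A).toReal * ((μ B).toReal * C) := by
    refine abs_setIntegral_le' (mul_nonneg ENNReal.toReal_nonneg hC) (fun u => ?_)
      (hw.intInner hC A B)
    · exact abs_setIntegral_le' hC (hw.2 u) (hw.intSec u B)
  have hd : (0:ℝ) ≤ (μ A).toReal * (μ B).toReal := by positivity
  rcases eq_or_lt_of_le hd with h | h
  · rw [Fav, ← h, div_zero, abs_zero]; exact hC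
  · rw [Fav, abs_div, abs_of_pos h, div_le_iff₀ h]
    calc |∫ u in A, ∫ v in B, w u v ∂μ ∂μ| ≤ (μ A).toReal * ((μ B).toReal * C) := hnum
      _ = C * ((μ A).toReal * (μ B).toReal) := by ring

lemma Fav_nonneg {w : Ω → Ω → ℝ} (hP : Measurable P) (hw : ∀ x y, 0 ≤ w x y) (a b : Fin N) : 0 ≤ Fav μ P w a b := by
  apply div_nonneg _ (by positivity)
  apply setIntegral_nonneg (hP (measurableSet_singleton a))
  intro u _
  exact setIntegral_nonneg (hP (measurableSet_singleton b)) (fun v _ => hw u v)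


lemma BM.mul {g : Ω → Ω → ℝ} {D : ℝ} (hf : BM f C) (hg : BM g D) (hC : 0 ≤ C) :
    BM (fun x y => f x y * g x y) (C * D) := by
  refine ⟨hf.1.mul hg.1, fun x y => ?_⟩
  rw [abs_mul]
  exact mul_le_mul (hf.2 x y) (hg.2 x y) (abs_nonneg _) hC

lemma BM.sub {g : Ω → Ω → ℝ} {D : ℝ} (hf : BM f C) (hg : BM g D) :
    BM (fun x y => f x y - g x y) (C + D) := by
  refine ⟨hf.1.sub hg.1, fun x y => ?_⟩
  calc |f x y - g x y| ≤ |f x y| + |g x y| := abs_sub _ _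
    _ ≤ C + D := add_le_add (hf.2 x y) (hg.2 x y)

lemma BM.sq (hf : BM f C) (hC : 0 ≤ C) :
    BM (fun x y => f x y ^ 2) (C ^ 2) := by
  refine ⟨?_, fun x y => ?_⟩
  · have := hf.1.mul hf.1
    exact hf.1.pow_const 2
  · rw [abs_pow, ← sq_abs, sq_abs]
    exact pow_le_pow_left₀ (abs_nonneg _) (hf.2 x y) 2

lemma II_add {g : Ω → Ω → ℝ} {D : ℝ} (hC : 0 ≤ C) (hD : 0 ≤ D)
    (hf : BM f C) (hg : BM g D) {S T : Set Ω} :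
    ∫ x in S, ∫ y in T, (f x y + g x y) ∂μ ∂μ
      = (∫ x in S, ∫ y in T, f x y ∂μ ∂μ) + ∫ x in S, ∫ y in T, g x y ∂μ ∂μ := by
  have h1 : ∀ x, ∫ y in T, (f x y + g x y) ∂μ
      = (∫ y in T, f x y ∂μ) + ∫ y in T, g x y ∂μ :=
    fun x => integral_add (hf.intSec x T) (hg.intSec x T)
  simp only [h1]
  exact integral_add (hf.intInner hC S T) (hg.intInner hD S T)

lemma II_sub {g : Ω → Ω → ℝ} {D : ℝ} (hC : 0 ≤ C) (hD : 0 ≤ D)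
    (hf : BM f C) (hg : BM g D) {S T : Set Ω} :
    ∫ x in S, ∫ y in T, (f x y - g x y) ∂μ ∂μ
      = (∫ x in S, ∫ y in T, f x y ∂μ ∂μ) - ∫ x in S, ∫ y in T, g x y ∂μ ∂μ := by
  have h1 : ∀ x, ∫ y in T, (f x y - g x y) ∂μ
      = (∫ y in T, f x y ∂μ) - ∫ y in T, g x y ∂μ :=
    fun x => integral_sub (hf.intSec x T) (hg.intSec x T)
  simp only [h1]
  exact integral_sub (hf.intInner hC S T) (hg.intInner hD S T)

lemma II_const_mul (r : ℝ) {S T : Set Ω} :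
    ∫ x in S, ∫ y in T, r * f x y ∂μ ∂μ = r * ∫ x in S, ∫ y in T, f x y ∂μ ∂μ := by
  simp only [integral_const_mul]

lemma II_nonneg {S T : Set Ω} (hf : ∀ x y, 0 ≤ f x y) :
    0 ≤ ∫ x in S, ∫ y in T, f x y ∂μ ∂μ :=
  integral_nonneg fun x => integral_nonneg fun y => hf x y


lemma BM.step_bm (hC : 0 ≤ C) (hw : BM f C) (hP : Measurable P) :
    BM (stepping μ P f) C := by
  refine ⟨?_, fun x y => by rw [stepping_eq_F]; exact Fav_abs_le hC hw _ _⟩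
  have : (uncurry (stepping μ P f)) = (uncurry (Fav μ P f)) ∘
      (fun z : Ω × Ω => (P z.1, P z.2)) := rfl
  rw [this]
  exact (measurable_of_countable _).comp ((hP.comp measurable_fst).prodMk (hP.comp measurable_snd))

lemma cell_integral_stepping (hC : 0 ≤ C) (hw : BM f C) (hP : Measurable P) (a b : Fin N) :
    ∫ x in P ⁻¹' {a}, ∫ y in P ⁻¹' {b}, stepping μ P f x y ∂μ ∂μ
      = ∫ x in P ⁻¹' {a}, ∫ y in P ⁻¹' {b}, f x y ∂μ ∂μ := by
  set A := P ⁻¹' {a} with hA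
  set B := P ⁻¹' {b} with hB
  have hmA : MeasurableSet A := hP (measurableSet_singleton a)
  have hmB : MeasurableSet B := hP (measurableSet_singleton b)
  rcases eq_or_ne (μ A) 0 with hA0 | hA0
  · rw [Measure.restrict_eq_zero.mpr hA0]
    simp
  rcases eq_or_ne (μ B) 0 with hB0 | hB0
  · have hz : ∀ (g : Ω → Ω → ℝ) x, (∫ y in B, g x y ∂μ) = 0 := fun g x => by
      rw [Measure.restrict_eq_zero.mpr hB0, integral_zero_measure]
    simp only [hz, integral_zero]
  have h1 : EqOn (fun x => ∫ y in B, stepping μ P f x y ∂μ)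
      (fun _ => Fav μ P f a b * (μ B).toReal) A := by
    intro x hx
    have h2 : EqOn (fun y => stepping μ P f x y) (fun _ => Fav μ P f a b) B := by
      intro y hy
      show stepping μ P f x y = _
      rw [stepping_eq_F, show P x = a from hx, show P y = b from hy]
    show (∫ y in B, stepping μ P f x y ∂μ) = _
    rw [setIntegral_congr_fun hmB h2, setIntegral_const, smul_eq_mul, mul_comm, measureReal_def]
  rw [setIntegral_congr_fun hmA h1, setIntegral_const, smul_eq_mul, measureReal_def]
  rw [Fav, ← hA, ← hB]
  have hdA : (μ A).toReal ≠ 0 := by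
    simp [ENNReal.toReal_eq_zero_iff, hA0, measure_ne_top μ A]
  have hdB : (μ B).toReal ≠ 0 := by
    simp [ENNReal.toReal_eq_zero_iff, hB0, measure_ne_top μ B]
  field_simp

/-- Orthogonality: `w - w^P` integrates to zero against any `P`-step function. -/
lemma orth (hC : 0 ≤ C) (hw : BM f C) (hP : Measurable P) (G : Fin N → Fin N → ℝ)
    {D : ℝ} (hG : ∀ a b, |G a b| ≤ D) :
    ∫ x, ∫ y, (f x y - stepping μ P f x y) * G (P x) (P y) ∂μ ∂μ = 0 := by
  have : Nonempty Ω := Measure.nonempty_of_neZero μ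
  obtain ⟨x0⟩ := this
  have hD : 0 ≤ D := le_trans (abs_nonneg _) (hG (P x0) (P x0))
  have hs : BM (stepping μ P f) C := hw.step_bm hC hP
  have hsplit : ∀ x y, (f x y - stepping μ P f x y) * G (P x) (P y)
      = f x y * G (P x) (P y) - stepping μ P f x y * G (P x) (P y) := fun x y => by ring
  simp only [hsplit]
  have h2 := II_sub (μ := μ) (S := univ) (T := univ) (mul_nonneg hC hD) (mul_nonneg hC hD)
    (hw.mulG hC hP hG) (hs.mulG hC hP hG)
  simp only [Measure.restrict_univ] at h2
  rw [h2, L0 hC hw hP G hG, L0 hC hs hP G hG, sub_eq_zero]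
  refine Finset.sum_congr rfl fun a _ => Finset.sum_congr rfl fun b _ => ?_
  rw [cell_integral_stepping hC hw hP a b]


lemma int_mul_ind (hC : 0 ≤ C) (hf : BM f C) (hP : Measurable P)
    (σ τ : Finset (Fin N)) :
    ∫ x, ∫ y, f x y * ((if P x ∈ σ then (1:ℝ) else 0) * (if P y ∈ τ then (1:ℝ) else 0)) ∂μ ∂μ
      = ∫ x in P ⁻¹' ↑σ, ∫ y in P ⁻¹' ↑τ, f x y ∂μ ∂μ := by
  have hmS : MeasurableSet (P ⁻¹' ↑σ) := hP MeasurableSet.of_discrete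
  have hmT : MeasurableSet (P ⁻¹' ↑τ) := hP MeasurableSet.of_discrete
  have hinner : ∀ x, ∫ y, f x y * ((if P x ∈ σ then (1:ℝ) else 0) * (if P y ∈ τ then (1:ℝ) else 0)) ∂μ
      = (if P x ∈ σ then (1:ℝ) else 0) * ∫ y in P ⁻¹' ↑τ, f x y ∂μ := by
    intro x
    have h1 : ∀ y, f x y * ((if P x ∈ σ then (1:ℝ) else 0) * (if P y ∈ τ then (1:ℝ) else 0))
        = (if P x ∈ σ then (1:ℝ) else 0) * ((P ⁻¹' ↑τ).indicator (f x) y) := by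
      intro y
      by_cases hy : P y ∈ τ
      · rw [Set.indicator_of_mem (by simpa using hy), if_pos hy]; ring
      · rw [Set.indicator_of_notMem (by simpa using hy), if_neg hy]; ring
    simp only [h1]
    rw [integral_const_mul, integral_indicator hmT]
  simp only [hinner]
  have h2 : ∀ x, (if P x ∈ σ then (1:ℝ) else 0) * (∫ y in P ⁻¹' ↑τ, f x y ∂μ)
      = (P ⁻¹' ↑σ).indicator (fun x => ∫ y in P ⁻¹' ↑τ, f x y ∂μ) x := by
    intro x
    by_cases hx : P x ∈ σ
    · rw [Set.indicator_of_mem (by simpa using hx), if_pos hx, one_mul]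
    · rw [Set.indicator_of_notMem (by simpa using hx), if_neg hx, zero_mul]
  simp only [h2]
  rw [integral_indicator hmS]

/-- restricted set-integrals of the stepping agree with those of `f`,
for sets that are unions of cells. -/
lemma setInt_stepping_eq (hC : 0 ≤ C) (hf : BM f C) (hP : Measurable P)
    (σ τ : Finset (Fin N)) :
    ∫ x in P ⁻¹' ↑σ, ∫ y in P ⁻¹' ↑τ, stepping μ P f x y ∂μ ∂μ
      = ∫ x in P ⁻¹' ↑σ, ∫ y in P ⁻¹' ↑τ, f x y ∂μ ∂μ := by
  have hG : ∀ a b : Fin N, |(if a ∈ σ then (1:ℝ) else 0) * (if b ∈ τ then (1:ℝ) else 0)| ≤ 1 := by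
    intro a b
    rcases em (a ∈ σ) with h|h <;> rcases em (b ∈ τ) with h'|h' <;> simp [h, h']
  have horth := orth (μ := μ) hC hf hP (fun a b => (if a ∈ σ then (1:ℝ) else 0) * (if b ∈ τ then (1:ℝ) else 0)) hG
  have hs : BM (stepping μ P f) C := hf.step_bm hC hP
  have hsplit : ∀ x y, (f x y - stepping μ P f x y) *
        ((if P x ∈ σ then (1:ℝ) else 0) * (if P y ∈ τ then (1:ℝ) else 0))
      = f x y * ((if P x ∈ σ then (1:ℝ) else 0) * (if P y ∈ τ then (1:ℝ) else 0))
        - stepping μ P f x y * ((if P x ∈ σ then (1:ℝ) else 0) * (if P y ∈ τ then (1:ℝ) else 0)) :=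
    fun x y => by ring
  simp only [hsplit] at horth
  have h2 := II_sub (μ := μ) (S := univ) (T := univ) (mul_nonneg hC one_pos.le)
    (mul_nonneg hC one_pos.le) (hf.mulG hC hP hG) (hs.mulG hC hP hG)
  simp only [Measure.restrict_univ] at h2
  rw [h2, sub_eq_zero, int_mul_ind hC hf hP σ τ, int_mul_ind hC hs hP σ τ] at horth
  exact horth.symm

/-- 1-dimensional Cauchy–Schwarz with constants. -/
lemma sq_setIntegral_le {S : Set Ω} {g : Ω → ℝ}
    (hg : Integrable g (μ.restrict S)) (hg2 : Integrable (fun x => g x ^ 2) (μ.restrict S)) :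
    (∫ x in S, g x ∂μ) ^ 2 ≤ (μ S).toReal * ∫ x in S, g x ^ 2 ∂μ := by
  set M := (μ S).toReal with hM
  set I := ∫ x in S, g x ∂μ with hI
  have hMnn : 0 ≤ M := ENNReal.toReal_nonneg
  have hkey : 0 ≤ ∫ x in S, (M * g x - I) ^ 2 ∂μ := integral_nonneg fun x => sq_nonneg _
  have hexp : ∀ x, (M * g x - I) ^ 2 = M ^ 2 * g x ^ 2 - (2 * M * I) * g x + I ^ 2 :=
    fun x => by ring
  simp only [hexp] at hkey
  have e1 : Integrable (fun x => M ^ 2 * g x ^ 2 - 2 * M * I * g x) (μ.restrict S) :=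
    (hg2.const_mul _).sub (hg.const_mul _)
  have e2 : ∫ x in S, (M ^ 2 * g x ^ 2 - 2 * M * I * g x + I ^ 2) ∂μ
      = (∫ x in S, (M ^ 2 * g x ^ 2 - 2 * M * I * g x) ∂μ) + M * I ^ 2 := by
    rw [integral_add e1 (integrable_const _), integral_const, measureReal_def, Measure.restrict_apply_univ,
      smul_eq_mul]
  have e3 : ∫ x in S, (M ^ 2 * g x ^ 2 - 2 * M * I * g x) ∂μ
      = M ^ 2 * (∫ x in S, g x ^ 2 ∂μ) - 2 * M * I * I := by
    rw [integral_sub (hg2.const_mul _) (hg.const_mul _), integral_const_mul, integral_const_mul]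
  rw [e2, e3] at hkey
  rcases eq_or_lt_of_le hMnn with h0 | h0
  · have hS0 : μ S = 0 := by
      rcases (ENNReal.toReal_eq_zero_iff _).mp h0.symm with h | h
      · exact h
      · exact absurd h (measure_ne_top μ S)
    rw [hI, Measure.restrict_eq_zero.mpr hS0, integral_zero_measure]
    simpa using mul_nonneg hMnn (by
      rw [Measure.restrict_eq_zero.mpr hS0, integral_zero_measure])
  · nlinarith [hkey, h0]


lemma BM.const_mul (hf : BM f C) (r : ℝ) :
    BM (fun x y => r * f x y) (|r| * C) := by
  refine ⟨(measurable_const.mul hf.1 : Measurable fun z : Ω × Ω => r * f z.1 z.2), fun x y => ?_⟩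
  rw [abs_mul]
  exact mul_le_mul_of_nonneg_left (hf.2 x y) (abs_nonneg r)

/-- Cauchy–Schwarz for double set-integrals on a probability space. -/
lemma sq_II_le (hC : 0 ≤ C) (hf : BM f C) (S T : Set Ω) :
    (∫ x in S, ∫ y in T, f x y ∂μ ∂μ) ^ 2 ≤ ∫ x, ∫ y, f x y ^ 2 ∂μ ∂μ := by
  set g := fun x => ∫ y in T, f x y ∂μ with hgdef
  have hμS : (μ S).toReal ≤ 1 := by
    simpa using (ENNReal.toReal_mono (by simp) (prob_le_one (μ := μ) (s := S)))
  have hμT : (μ T).toReal ≤ 1 := by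
    simpa using (ENNReal.toReal_mono (by simp) (prob_le_one (μ := μ) (s := T)))
  have hgb : ∀ x, |g x| ≤ C := fun x => abs_setIntegral_le hC (hf.2 x) (hf.intSec x T)
  have hgm : Measurable g := hf.innerMeas T
  have hf2 : BM (fun x y => f x y ^ 2) (C ^ 2) := hf.sq hC
  have hg2m : Measurable (fun x => g x ^ 2) := hgm.pow_const 2
  have hg2i : Integrable (fun x => g x ^ 2) μ := by
    refine Integrable.mono' (integrable_const (C ^ 2)) hg2m.aestronglyMeasurable
      (Filter.Eventually.of_forall fun x => ?_)
    rw [Real.norm_eq_abs, abs_pow]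
    exact pow_le_pow_left₀ (abs_nonneg _) (hgb x) 2
  have hgi : Integrable g μ := by
    refine Integrable.mono' (integrable_const C) hgm.aestronglyMeasurable
      (Filter.Eventually.of_forall fun x => ?_)
    rw [Real.norm_eq_abs]; exact hgb x
  have h1 : (∫ x in S, g x ∂μ) ^ 2 ≤ (μ S).toReal * ∫ x in S, g x ^ 2 ∂μ :=
    sq_setIntegral_le hgi.integrableOn hg2i.integrableOn
  have h2 : ∫ x in S, g x ^ 2 ∂μ ≤ ∫ x, g x ^ 2 ∂μ :=
    setIntegral_le_integral hg2i (Filter.Eventually.of_forall fun x => sq_nonneg _)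
  have h3 : ∫ x, g x ^ 2 ∂μ ≤ ∫ x, ∫ y, f x y ^ 2 ∂μ ∂μ := by
    refine integral_mono hg2i (hf2.intInnerFull (by positivity)) fun x => ?_
    have hx1 : (∫ y in T, f x y ∂μ) ^ 2 ≤ (μ T).toReal * ∫ y in T, f x y ^ 2 ∂μ :=
      sq_setIntegral_le (hf.intSec x T) (hf2.intSec x T)
    have hx2 : ∫ y in T, f x y ^ 2 ∂μ ≤ ∫ y, f x y ^ 2 ∂μ :=
      setIntegral_le_integral (hf2.intSecFull x) (Filter.Eventually.of_forall fun y => sq_nonneg _)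
    have hx3 : (0:ℝ) ≤ ∫ y in T, f x y ^ 2 ∂μ :=
      integral_nonneg fun y => sq_nonneg _
    calc g x ^ 2 ≤ (μ T).toReal * ∫ y in T, f x y ^ 2 ∂μ := hx1
      _ ≤ 1 * ∫ y in T, f x y ^ 2 ∂μ := mul_le_mul_of_nonneg_right hμT hx3
      _ = ∫ y in T, f x y ^ 2 ∂μ := one_mul _
      _ ≤ ∫ y, f x y ^ 2 ∂μ := hx2
  have h4 : (0:ℝ) ≤ ∫ x in S, g x ^ 2 ∂μ := integral_nonneg fun x => sq_nonneg _
  nlinarith [h1, h2, h3, h4]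

/-- expansion of the square of a difference under the double integral. -/
lemma II_sq_expand {g : Ω → Ω → ℝ} {D : ℝ} (hC : 0 ≤ C) (hD : 0 ≤ D)
    (hf : BM f C) (hg : BM g D) :
    ∫ x, ∫ y, (f x y - g x y) ^ 2 ∂μ ∂μ
      = (∫ x, ∫ y, f x y ^ 2 ∂μ ∂μ) - 2 * (∫ x, ∫ y, f x y * g x y ∂μ ∂μ)
        + ∫ x, ∫ y, g x y ^ 2 ∂μ ∂μ := by
  have hexp : ∀ x y, (f x y - g x y) ^ 2
      = (f x y ^ 2 - 2 * (f x y * g x y)) + g x y ^ 2 := fun x y => by ring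
  simp only [hexp]
  have hA : BM (fun x y => f x y ^ 2 - 2 * (f x y * g x y)) (C ^ 2 + |(2:ℝ)| * (C * D)) :=
    (hf.sq hC).sub ((hf.mul hg hC).const_mul 2)
  have e1 := II_add (μ := μ) (S := univ) (T := univ) (by positivity)
    (by positivity) hA ((hg.sq hD))
  simp only [Measure.restrict_univ] at e1
  rw [e1]
  have e2 := II_sub (μ := μ) (S := univ) (T := univ) (by positivity)
    (by positivity) (hf.sq hC) ((hf.mul hg hC).const_mul 2)
  simp only [Measure.restrict_univ] at e2
  rw [e2]
  have e3 := II_const_mul (μ := μ) (f := fun x y => f x y * g x y) (S := univ) (T := univ) 2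
  simp only [Measure.restrict_univ] at e3
  rw [e3]


/-- the energy of a partition -/
noncomputable def Energy (μ : Measure Ω) (P : Ω → Fin N) (f : Ω → Ω → ℝ) : ℝ :=
  ∫ x, ∫ y, (stepping μ P f x y) ^ 2 ∂μ ∂μ

lemma II_step_eq_II (hC : 0 ≤ C) (hf : BM f C) (hP : Measurable P) :
    ∫ x, ∫ y, stepping μ P f x y ∂μ ∂μ = ∫ x, ∫ y, f x y ∂μ ∂μ := by
  have h := orth (μ := μ) hC hf hP (fun _ _ => (1:ℝ)) (D := 1) (fun a b => by norm_num)
  simp only [mul_one] at h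
  have h2 := II_sub (μ := μ) (S := univ) (T := univ) hC hC hf (hf.step_bm (μ := μ) hC hP)
  simp only [Measure.restrict_univ] at h2
  rw [h2, sub_eq_zero] at h
  exact h.symm

lemma II_mul_step_eq (hC : 0 ≤ C) (hf : BM f C) (hP : Measurable P) :
    ∫ x, ∫ y, f x y * stepping μ P f x y ∂μ ∂μ = Energy μ P f := by
  have h := orth (μ := μ) hC hf hP (Fav μ P f) (D := C) (Fav_abs_le hC hf)
  have hre : ∀ x y, (f x y - stepping μ P f x y) * Fav μ P f (P x) (P y)
      = f x y * stepping μ P f x y - stepping μ P f x y * stepping μ P f x y := by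
    intro x y
    have hxy : stepping μ P f x y = Fav μ P f (P x) (P y) := rfl
    rw [← hxy]
    ring
  simp only [hre] at h
  have hs := hf.step_bm (μ := μ) hC hP
  have h2 := II_sub (μ := μ) (S := univ) (T := univ) (mul_nonneg hC hC) (mul_nonneg hC hC)
    (hf.mul hs hC) (hs.mul hs hC)
  simp only [Measure.restrict_univ] at h2
  rw [h2, sub_eq_zero] at h
  rw [h, Energy]
  simp only [pow_two]

lemma energy_le (hC : 0 ≤ C) (hf : BM f C) (hP : Measurable P) :
    Energy μ P f ≤ ∫ x, ∫ y, f x y ^ 2 ∂μ ∂μ := by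
  have hs := hf.step_bm (μ := μ) hC hP
  have hpos : (0:ℝ) ≤ ∫ x, ∫ y, (f x y - stepping μ P f x y) ^ 2 ∂μ ∂μ :=
    integral_nonneg fun x => integral_nonneg fun y => sq_nonneg _
  have hexp := II_sq_expand (μ := μ) hC hC hf hs
  rw [II_mul_step_eq hC hf hP] at hexp
  have : Energy μ P f = ∫ x, ∫ y, (stepping μ P f x y) ^ 2 ∂μ ∂μ := rfl
  nlinarith [hpos, hexp]

lemma energy_ge (hC : 0 ≤ C) (hf : BM f C) (hP : Measurable P) :
    (∫ x, ∫ y, f x y ∂μ ∂μ) ^ 2 ≤ Energy μ P f := by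
  have hs := hf.step_bm (μ := μ) hC hP
  have h1 := sq_II_le (μ := μ) hC hs univ univ
  simp only [Measure.restrict_univ] at h1
  rw [II_step_eq_II hC hf hP] at h1
  exact h1

lemma energy_nonneg : (0:ℝ) ≤ Energy μ P f :=
  integral_nonneg fun x => integral_nonneg fun y => sq_nonneg _


lemma pythagoras {N' : ℕ} {P' : Ω → Fin N'} {c : Fin N' → Fin N}
    (hC : 0 ≤ C) (hf : BM f C) (hP : Measurable P) (hP' : Measurable P')
    (hc : P = c ∘ P') :
    Energy μ P' f = Energy μ P f
      + ∫ x, ∫ y, (stepping μ P' f x y - stepping μ P f x y) ^ 2 ∂μ ∂μ := by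
  set G : Fin N' → Fin N' → ℝ := fun a b => Fav μ P f (c a) (c b) with hGdef
  set s := stepping μ P f with hsdef
  set s' := stepping μ P' f with hs'def
  have hs : BM s C := hf.step_bm (μ := μ) hC hP
  have hs' : BM s' C := hf.step_bm (μ := μ) hC hP'
  have hsG : ∀ x y, s x y = G (P' x) (P' y) := by
    intro x y
    have : s x y = Fav μ P f (P x) (P y) := rfl
    rw [this, show P x = c (P' x) from congrFun hc x, show P y = c (P' y) from congrFun hc y]
  have hGb : ∀ a b, |G a b| ≤ C := fun a b => Fav_abs_le hC hf _ _
  have h1 := orth (μ := μ) hC hf hP' G hGb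
  have hre : ∀ x y, (f x y - s' x y) * G (P' x) (P' y)
      = f x y * s x y - s' x y * s x y := by
    intro x y
    rw [← hsG x y]
    ring
  rw [← hs'def] at h1
  simp only [hre] at h1
  have h2 := II_sub (μ := μ) (S := univ) (T := univ) (mul_nonneg hC hC) (mul_nonneg hC hC)
    (hf.mul hs hC) (hs'.mul hs hC)
  simp only [Measure.restrict_univ] at h2
  rw [h2, sub_eq_zero] at h1
  have h3 : ∫ x, ∫ y, f x y * s x y ∂μ ∂μ = Energy μ P f := II_mul_step_eq hC hf hP
  have h4 := II_sq_expand (μ := μ) hC hC hs' hs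
  have h5 : ∫ x, ∫ y, s x y ^ 2 ∂μ ∂μ = Energy μ P f := rfl
  have h6 : ∫ x, ∫ y, s' x y ^ 2 ∂μ ∂μ = Energy μ P' f := rfl
  rw [h5, h6, ← h1, h3] at h4
  linarith

lemma energy_increment {N' : ℕ} {P' : Ω → Fin N'} {c : Fin N' → Fin N}
    (hC : 0 ≤ C) (hf : BM f C) (hP : Measurable P) (hP' : Measurable P')
    (hc : P = c ∘ P') (σ τ : Finset (Fin N')) :
    Energy μ P f
      + (∫ x in P' ⁻¹' ↑σ, ∫ y in P' ⁻¹' ↑τ, (f x y - stepping μ P f x y) ∂μ ∂μ) ^ 2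
      ≤ Energy μ P' f := by
  set s := stepping μ P f with hsdef
  set s' := stepping μ P' f with hs'def
  have hs : BM s C := hf.step_bm (μ := μ) hC hP
  have hs' : BM s' C := hf.step_bm (μ := μ) hC hP'
  set S := P' ⁻¹' (↑σ : Set (Fin N')) with hSdef
  set T := P' ⁻¹' (↑τ : Set (Fin N')) with hTdef
  have e1 : ∫ x in S, ∫ y in T, (f x y - s x y) ∂μ ∂μ
      = (∫ x in S, ∫ y in T, f x y ∂μ ∂μ) - ∫ x in S, ∫ y in T, s x y ∂μ ∂μ :=
    II_sub (μ := μ) hC hC hf hs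
  have e2 : ∫ x in S, ∫ y in T, (s' x y - s x y) ∂μ ∂μ
      = (∫ x in S, ∫ y in T, s' x y ∂μ ∂μ) - ∫ x in S, ∫ y in T, s x y ∂μ ∂μ :=
    II_sub (μ := μ) hC hC hs' hs
  have e3 : ∫ x in S, ∫ y in T, s' x y ∂μ ∂μ = ∫ x in S, ∫ y in T, f x y ∂μ ∂μ :=
    setInt_stepping_eq (μ := μ) hC hf hP' σ τ
  have key : ∫ x in S, ∫ y in T, (f x y - s x y) ∂μ ∂μ
      = ∫ x in S, ∫ y in T, (s' x y - s x y) ∂μ ∂μ := by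
    rw [e1, e2, e3]
  have hCS := sq_II_le (μ := μ) (C := C + C) (by linarith) (hs'.sub hs) S T
  rw [← key] at hCS
  have hpyth := pythagoras (μ := μ) hC hf hP hP' hc
  linarith


lemma cutNorm_le {X : Ω → Ω → ℝ} (hC : 0 ≤ C) (hX : BM X C) : cutNorm μ X ≤ C := by
  refine Real.iSup_le (fun S => Real.iSup_le (fun T => ?_) hC) hC
  exact abs_II_le hC hX

lemma cutNorm_witness {X : Ω → Ω → ℝ} {ε' : ℝ} (h : ε' < cutNorm μ X) :
    ∃ S T : Set Ω, MeasurableSet S ∧ MeasurableSet T ∧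
      ε' < |∫ x in S, ∫ y in T, X x y ∂μ ∂μ| := by
  obtain ⟨S, hS⟩ := exists_lt_of_lt_ciSup h
  obtain ⟨T, hT⟩ := exists_lt_of_lt_ciSup hS
  exact ⟨S.1, T.1, S.2, T.2, hT⟩

lemma refine_partition (hP : Measurable P) {S T : Set Ω}
    (hS : MeasurableSet S) (hT : MeasurableSet T) :
    ∃ P' : Ω → Fin (N * 4), Measurable P' ∧ (∃ c' : Fin (N * 4) → Fin N, P = c' ∘ P') ∧
      (∃ σ τ : Finset (Fin (N * 4)), S = P' ⁻¹' ↑σ ∧ T = P' ⁻¹' ↑τ) := by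
  classical
  set b : Ω → Fin 4 := fun x =>
    if x ∈ S then (if x ∈ T then 0 else 1) else (if x ∈ T then 2 else 3) with hb
  have hbm : Measurable b :=
    Measurable.ite hS (Measurable.ite hT measurable_const measurable_const)
      (Measurable.ite hT measurable_const measurable_const)
  set P' : Ω → Fin (N * 4) := fun x => finProdFinEquiv (P x, b x) with hP'
  have hP'm : Measurable P' := (measurable_of_countable _).comp (hP.prodMk hbm)
  have hsymm : ∀ x, finProdFinEquiv.symm (P' x) = (P x, b x) := fun x =>
    Equiv.symm_apply_apply _ _
  refine ⟨P', hP'm, ⟨fun j => (finProdFinEquiv.symm j).1, funext fun x => ?_⟩,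
    ⟨Finset.univ.filter (fun j => (finProdFinEquiv.symm j).2 = 0 ∨ (finProdFinEquiv.symm j).2 = 1),
     Finset.univ.filter (fun j => (finProdFinEquiv.symm j).2 = 0 ∨ (finProdFinEquiv.symm j).2 = 2),
     ?_, ?_⟩⟩
  · show P x = (finProdFinEquiv.symm (P' x)).1
    rw [hsymm]
  · ext x
    simp only [Set.mem_preimage, Finset.coe_filter, Set.mem_setOf_eq, Finset.mem_univ,
      true_and, hsymm]
    by_cases hx : x ∈ S <;> by_cases hx' : x ∈ T <;> simp [hb, hx, hx']
  · ext x
    simp only [Set.mem_preimage, Finset.coe_filter, Set.mem_setOf_eq, Finset.mem_univ,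
      true_and, hsymm]
    by_cases hx : x ∈ S <;> by_cases hx' : x ∈ T <;> simp [hb, hx, hx']

end API

set_option maxHeartbeats 2000000 in
/-- Weak regularity lemma for tuples of bigraphons: for all `r, m ∈ ℕ`
(`r ≥ 2` so that `log r > 0`), every `m`-tuple of bigraphons `W₁,…,W_m` on `Ω²`, and
every partition `𝓟*` of `Ω` (given as a measurable map `Q : Ω → Fin p`), there is a
partition `𝓟` of `Ω` into at most `r·p` classes refining `𝓟*` such that
`‖W_i − (W_i)^{⋈𝓟}‖_□ < √(2m/log r)` for each `i`. -/
theorem weak_regularity_tuples {Ω : Type*} [MeasurableSpace Ω]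
    (μ : Measure Ω) [IsProbabilityMeasure μ]
    (r m : ℕ) (hr : 1 < r) (W : Fin m → Ω → Ω → ℝ)
    (hWmeas : ∀ i, Measurable (Function.uncurry (W i)))
    (hW01 : ∀ i x y, W i x y ∈ Set.Icc (0:ℝ) 1)
    (p : ℕ) (Q : Ω → Fin p) (hQ : Measurable Q) :
    ∃ N : ℕ, N ≤ r * p ∧
      ∃ P : Ω → Fin N, Measurable P ∧
        (∃ c : Fin N → Fin p, Q = c ∘ P) ∧
        ∀ i, cutNorm μ (fun x y => W i x y - stepping μ P (W i) x y)
              < Real.sqrt (2 * m / Real.log r) := by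
  classical
  set ε := Real.sqrt (2 * m / Real.log r) with hε
  have hr1 : (1:ℝ) < (r:ℝ) := by exact_mod_cast hr
  have hlogr : 0 < Real.log r := Real.log_pos hr1
  have hBMW : ∀ i, BM (W i) 1 := fun i => ⟨hWmeas i, fun x y => by
    have h := hW01 i x y
    rw [abs_le]; exact ⟨by linarith [h.1], h.2⟩⟩
  have hBMdiff : ∀ {N : ℕ} {P : Ω → Fin N}, Measurable P → ∀ i,
      BM (fun x y => W i x y - stepping μ P (W i) x y) 1 := by
    intro N P hP i
    have hs := (hBMW i).step_bm (μ := μ) zero_le_one hP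
    refine ⟨(hWmeas i).sub hs.1, fun x y => ?_⟩
    have h1 := hW01 i x y
    have h2 : 0 ≤ stepping μ P (W i) x y := by
      rw [stepping_eq_F]
      exact Fav_nonneg hP (fun u v => (hW01 i u v).1) _ _
    have h3 : |stepping μ P (W i) x y| ≤ 1 := hs.2 x y
    rw [abs_le] at h3
    show |W i x y - stepping μ P (W i) x y| ≤ 1
    rw [abs_le]
    exact ⟨by linarith [h1.1, h3.2], by linarith [h1.2]⟩
  rcases Nat.eq_zero_or_pos m with hm0 | hm
  · subst hm0
    exact ⟨p, Nat.le_mul_of_pos_left p (by omega), Q, hQ, ⟨id, rfl⟩, fun i => i.elim0⟩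
  have hmR : (1:ℝ) ≤ (m:ℝ) := by exact_mod_cast hm
  by_cases htriv : Real.log r < 2 * m
  · -- trivial case: the bound exceeds 1
    have hε1 : 1 < ε := by
      rw [hε, show (1:ℝ) = Real.sqrt 1 from Real.sqrt_one.symm]
      apply Real.sqrt_lt_sqrt zero_le_one
      rw [lt_div_iff₀ hlogr]; linarith
    exact ⟨p, Nat.le_mul_of_pos_left p (by omega), Q, hQ, ⟨id, rfl⟩, fun i =>
      lt_of_le_of_lt (cutNorm_le zero_le_one (hBMdiff hQ i)) hε1⟩
  push_neg at htriv
  set K := Nat.log 4 r with hK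
  have h4r : 4 ≤ r := by
    by_contra h
    push_neg at h
    have hr4 : (r:ℝ) ≤ 4 := by exact_mod_cast (by omega : r ≤ 4)
    have hl : Real.log r ≤ Real.log 4 := Real.log_le_log (by positivity) hr4
    have hlog4 : Real.log 4 < 2 := by
      rw [show (4:ℝ) = 2^2 by norm_num, Real.log_pow]
      push_cast
      nlinarith [Real.log_two_lt_d9]
    linarith
  have hK1 : 1 ≤ K := by
    rw [hK]
    exact (Nat.le_log_iff_pow_le (by norm_num) (by omega)).mpr (by simpa using h4r)
  have hKR : (1:ℝ) ≤ (K:ℝ) := by exact_mod_cast hK1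
  have hKr : 4 ^ K ≤ r := Nat.pow_log_le_self 4 (by omega)
  have hlog4 : Real.log 4 < 2 := by
    rw [show (4:ℝ) = 2^2 by norm_num, Real.log_pow]
    push_cast
    nlinarith [Real.log_two_lt_d9]
  have hlog8K : Real.log r < 8 * K := by
    have h1 : r < 4 ^ (K + 1) := Nat.lt_pow_succ_log_self (by norm_num) r
    have h2 : Real.log r < (K + 1) * Real.log 4 := by
      calc Real.log r < Real.log ((4:ℝ) ^ (K + 1)) := by
            apply Real.log_lt_log (by positivity)
            exact_mod_cast h1
        _ = (K + 1) * Real.log 4 := by rw [Real.log_pow]; push_cast; ring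
    have hl4nn : 0 ≤ Real.log 4 := Real.log_nonneg (by norm_num)
    nlinarith
  set ε2 := (2 * m / Real.log r + m / (4 * K)) / 2 with hε2
  have hKpos : (0:ℝ) < K := by linarith
  have ha : (0:ℝ) < 2 * m / Real.log r := div_pos (by linarith) hlogr
  have hb : (0:ℝ) < m / (4 * K) := div_pos (by linarith) (by linarith)
  have hlt : (m:ℝ) / (4 * K) < 2 * m / Real.log r := by
    rw [div_lt_div_iff₀ (by linarith) hlogr]
    nlinarith
  have hε2pos : 0 < ε2 := by rw [hε2]; linarith
  set ε' := Real.sqrt ε2 with hε'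
  have hε'sq : ε' ^ 2 = ε2 := Real.sq_sqrt hε2pos.le
  have hε'ε : ε' < ε := by
    rw [hε', hε]
    apply Real.sqrt_lt_sqrt hε2pos.le
    rw [hε2]; linarith
  have hKε' : (m:ℝ) / 4 < K * ε' ^ 2 := by
    rw [hε'sq, hε2]
    have he : (m:ℝ) / (4 * K) * K = m / 4 := by field_simp
    nlinarith
  have claim : ∀ k : ℕ, ∃ N : ℕ, N ≤ 4 ^ k * p ∧ ∃ P : Ω → Fin N, Measurable P ∧
      (∃ c : Fin N → Fin p, Q = c ∘ P) ∧
      ((∀ i, cutNorm μ (fun x y => W i x y - stepping μ P (W i) x y) < ε) ∨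
        (∑ i, (∫ x, ∫ y, W i x y ∂μ ∂μ) ^ 2) + k * ε' ^ 2 ≤ ∑ i, Energy μ P (W i)) := by
    intro k
    induction k with
    | zero =>
      refine ⟨p, by simp, Q, hQ, ⟨id, rfl⟩, Or.inr ?_⟩
      simp only [Nat.cast_zero, zero_mul, add_zero]
      exact Finset.sum_le_sum fun i _ => energy_ge (μ := μ) zero_le_one (hBMW i) hQ
    | succ k ih =>
      obtain ⟨N, hN, P, hP, ⟨c, hc⟩, hbranch⟩ := ih
      have hNle : N ≤ 4 ^ (k + 1) * p :=
        le_trans hN (Nat.mul_le_mul_right p (Nat.pow_le_pow_right (by norm_num) (Nat.le_succ k)))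
      rcases hbranch with hgood | henergy
      · exact ⟨N, hNle, P, hP, ⟨c, hc⟩, Or.inl hgood⟩
      by_cases hgood2 : ∀ i, cutNorm μ (fun x y => W i x y - stepping μ P (W i) x y) < ε
      · exact ⟨N, hNle, P, hP, ⟨c, hc⟩, Or.inl hgood2⟩
      push_neg at hgood2
      obtain ⟨i₀, hi₀⟩ := hgood2
      have hwit : ε' < cutNorm μ (fun x y => W i₀ x y - stepping μ P (W i₀) x y) :=
        lt_of_lt_of_le hε'ε hi₀
      obtain ⟨S, T, hS, hT, hST⟩ := cutNorm_witness (μ := μ) hwit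
      obtain ⟨P', hP'm, ⟨c', hcc⟩, ⟨σ, τ, hσ, hτ⟩⟩ := refine_partition hP hS hT
      refine ⟨N * 4, ?_, P', hP'm, ⟨c ∘ c', by rw [hc, hcc]; rfl⟩, Or.inr ?_⟩
      · calc N * 4 ≤ 4 ^ k * p * 4 := Nat.mul_le_mul_right 4 hN
          _ = 4 ^ (k + 1) * p := by ring
      have hinc : Energy μ P (W i₀) + ε' ^ 2 ≤ Energy μ P' (W i₀) := by
        have h1 := energy_increment (μ := μ) zero_le_one (hBMW i₀) hP hP'm hcc σ τ
        rw [← hσ, ← hτ] at h1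
        have h2 : ε' ^ 2 ≤
            (∫ x in S, ∫ y in T, (W i₀ x y - stepping μ P (W i₀) x y) ∂μ ∂μ) ^ 2 := by
          rw [← sq_abs (∫ x in S, ∫ y in T, (W i₀ x y - stepping μ P (W i₀) x y) ∂μ ∂μ)]
          exact pow_le_pow_left₀ (Real.sqrt_nonneg _) hST.le 2
        linarith
      have hmono : ∀ i, Energy μ P (W i) ≤ Energy μ P' (W i) := by
        intro i
        have hp := pythagoras (μ := μ) zero_le_one (hBMW i) hP hP'm hcc
        have hnn : (0:ℝ) ≤ ∫ x, ∫ y,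
            (stepping μ P' (W i) x y - stepping μ P (W i) x y) ^ 2 ∂μ ∂μ :=
          integral_nonneg fun x => integral_nonneg fun y => sq_nonneg _
        linarith
      have hsum : (∑ i, Energy μ P (W i)) + ε' ^ 2 ≤ ∑ i, Energy μ P' (W i) := by
        have e : (∑ i, Energy μ P (W i)) + ε' ^ 2
            = ∑ i, (Energy μ P (W i) + if i = i₀ then ε' ^ 2 else 0) := by
          rw [Finset.sum_add_distrib, Finset.sum_ite_eq' Finset.univ i₀ (fun _ => ε' ^ 2)]
          simp
        rw [e]
        refine Finset.sum_le_sum fun i _ => ?_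
        rcases eq_or_ne i i₀ with h | h
        · subst h
          simpa using hinc
        · rw [if_neg h, add_zero]
          exact hmono i
      push_cast
      calc (∑ i, (∫ x, ∫ y, W i x y ∂μ ∂μ) ^ 2) + ((k:ℝ) + 1) * ε' ^ 2
          = ((∑ i, (∫ x, ∫ y, W i x y ∂μ ∂μ) ^ 2) + k * ε' ^ 2) + ε' ^ 2 := by ring
        _ ≤ (∑ i, Energy μ P (W i)) + ε' ^ 2 := by
            have := henergy; linarith
        _ ≤ ∑ i, Energy μ P' (W i) := hsum
  obtain ⟨N, hN, P, hP, hcP, hbranch⟩ := claim K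
  rcases hbranch with hgood | henergy
  · exact ⟨N, le_trans hN (Nat.mul_le_mul_right p hKr), P, hP, hcP, hgood⟩
  exfalso
  have hup : ∀ i, Energy μ P (W i) ≤ ∫ x, ∫ y, W i x y ∂μ ∂μ := by
    intro i
    refine le_trans (energy_le (μ := μ) zero_le_one (hBMW i) hP) ?_
    refine integral_mono (((hBMW i).sq zero_le_one).intInnerFull (by norm_num))
      ((hBMW i).intInnerFull zero_le_one) fun x => ?_
    refine integral_mono (((hBMW i).sq zero_le_one).intSecFull x)
      ((hBMW i).intSecFull x) fun y => ?_
    have h := hW01 i x y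
    nlinarith [h.1, h.2]
  have hlo : ∀ i, (0:ℝ) ≤ ∫ x, ∫ y, W i x y ∂μ ∂μ := fun i =>
    integral_nonneg fun x => integral_nonneg fun y => (hW01 i x y).1
  have hhi : ∀ i, (∫ x, ∫ y, W i x y ∂μ ∂μ) ≤ 1 := by
    intro i
    have h := abs_II_le (μ := μ) (S := univ) (T := univ) zero_le_one (hBMW i)
    simp only [Measure.restrict_univ] at h
    exact le_trans (le_abs_self _) h
  have hq : ∀ i, (∫ x, ∫ y, W i x y ∂μ ∂μ) - (∫ x, ∫ y, W i x y ∂μ ∂μ) ^ 2 ≤ 1/4 := by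
    intro i
    nlinarith [hlo i, hhi i, sq_nonneg ((∫ x, ∫ y, W i x y ∂μ ∂μ) - 1/2)]
  have hsum1 : ∑ i, Energy μ P (W i) ≤ ∑ i, ∫ x, ∫ y, W i x y ∂μ ∂μ :=
    Finset.sum_le_sum fun i _ => hup i
  have hsum2 : ∑ i, ((∫ x, ∫ y, W i x y ∂μ ∂μ) - (∫ x, ∫ y, W i x y ∂μ ∂μ) ^ 2) ≤ m / 4 := by
    calc ∑ i, ((∫ x, ∫ y, W i x y ∂μ ∂μ) - (∫ x, ∫ y, W i x y ∂μ ∂μ) ^ 2)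
        ≤ ∑ _i : Fin m, (1/4 : ℝ) := Finset.sum_le_sum fun i _ => hq i
      _ = m * (1/4) := by simp [Finset.sum_const, Finset.card_univ]
      _ = m / 4 := by ring
  rw [Finset.sum_sub_distrib] at hsum2
  linarith [hKε', henergy, hsum1, hsum2]
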